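/- Let M be a binary matroid, T ⊆ E(M), and F ⊆ E(M) \ T. Then the matroid M − F (obtained by deleting the elements of F) has no circuit containing an element of T if and only if for every t ∈ T there is a cocircuit C of M with t ∈ C ⊆ F ∪ {t}. -/

import Mathlib

open Set

variable {α : Type*}

/-- A circuit of a matroid: an inclusion-minimal dependent set. -/
def MCircuit (M : Matroid α) (C : Set α) : Prop :=
  M.Dep C ∧ ∀ C' ⊂ C, M.Indep C'

/-- A binary matroid: one representable over GF(2). -/
def IsBinary (M : Matroid α) : Prop :=
  ∃ (n : ℕ) (φ : α → (Fin n → ZMod 2)),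
    ∀ I ⊆ M.E, (M.Indep I ↔ LinearIndependent (ZMod 2) (fun x : I => φ x))

/-- A cycle of a matroid: a (possibly empty) disjoint union of circuits. -/
def MCycle (M : Matroid α) (C : Set α) : Prop :=
  ∃ 𝒞 : Set (Set α), (∀ D ∈ 𝒞, MCircuit M D) ∧ 𝒞.Pairwise Disjoint ∧ C = ⋃₀ 𝒞

/-- Deletion of a set of elements from a matroid. -/
def MDelete (M : Matroid α) (D : Set α) : Matroid α := M.restrict (M.E \ D)

/-- The rank of a matroid: the supremum of sizes of independent sets. -/
noncomputable def mRank (M : Matroid α) : ℕ := sSup (Set.ncard '' {I | M.Indep I})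

/-- Fundamental circuit: if `I` is independent and `t ∈ cl(I) \ I`, there is a circuit
through `t` inside `I ∪ {t}`. -/
lemma exists_fund_circuit {M : Matroid α} {I : Set α} {t : α} (hI : M.Indep I) (htI : t ∉ I)
    (ht : t ∈ M.closure I) : ∃ C, MCircuit M C ∧ t ∈ C ∧ C ⊆ insert t I := by
  have htE : t ∈ M.E := M.closure_subset_ground I ht
  set J := {x ∈ I | t ∉ M.closure (I \ {x})} with hJdef
  have hJI : J ⊆ I := sep_subset _ _
  have htJ' : t ∉ J := fun h => htI (hJI h)
  have hJt : t ∈ M.closure J := by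
    by_contra htJ
    have hJind : M.Indep J := hI.subset hJI
    have h1 : M.Indep (insert t J) := by
      rw [hJind.insert_indep_iff_of_notMem htJ']
      exact ⟨htE, htJ⟩
    obtain ⟨B, hB, hsub⟩ := h1.subset_isBasis_of_subset
      (insert_subset_insert hJI) (insert_subset htE hI.subset_ground)
    have hdep : M.Dep (insert t I) := hI.insert_dep_iff.mpr ⟨ht, htI⟩
    have hne : ¬ I ⊆ B := by
      intro hIB
      have hBeq : B = insert t I :=
        subset_antisymm hB.subset (insert_subset (hsub (mem_insert _ _)) hIB)
      rw [hBeq] at hB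
      exact hdep.not_indep hB.indep
    obtain ⟨x, hxI, hxB⟩ := not_subset.mp hne
    have hxJ : x ∉ J := fun h => hxB (hsub (mem_insert_of_mem _ h))
    have hx : t ∈ M.closure (I \ {x}) := by
      by_contra h; exact hxJ ⟨hxI, h⟩
    have hBsub : B ⊆ M.closure (I \ {x}) := by
      intro y hyB
      rcases hB.subset hyB with (rfl | hyI)
      · exact hx
      · exact M.subset_closure _ (diff_subset.trans hI.subset_ground)
          ⟨hyI, fun h => hxB (h ▸ hyB)⟩
    have hxcl : x ∈ M.closure (I \ {x}) :=
      (M.closure_subset_closure_of_subset_closure hBsub)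
        (hB.subset_closure (mem_insert_of_mem _ hxI))
    exact hI.notMem_closure_sdiff_of_mem hxI hxcl
  refine ⟨insert t J, ⟨(hI.subset hJI).insert_dep_iff.mpr ⟨hJt, htJ'⟩, ?_⟩,
    mem_insert _ _, insert_subset_insert hJI⟩
  intro C' hC'
  by_cases htC' : t ∈ C'
  · obtain ⟨x, hxC, hxC'⟩ := exists_of_ssubset hC'
    have hxJ : x ∈ J := by
      rcases hxC with (rfl | h)
      · exact absurd htC' hxC'
      · exact h
    have hsub2 : C' \ {t} ⊆ I \ {x} := by
      intro y hy
      rcases hC'.subset hy.1 with (rfl | hyJ)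
      · exact absurd rfl hy.2
      · exact ⟨hJI hyJ, fun h => hxC' (h ▸ hy.1)⟩
    have hind : M.Indep (C' \ {t}) := hI.subset (hsub2.trans diff_subset)
    have h2 : M.Indep (insert t (C' \ {t})) := by
      rw [hind.insert_indep_iff_of_notMem (fun h => h.2 rfl)]
      exact ⟨htE, fun h => hxJ.2 (M.closure_subset_closure hsub2 h)⟩
    rwa [insert_diff_singleton, insert_eq_of_mem htC'] at h2
  · refine hI.subset fun y hy => ?_
    rcases hC'.subset hy with (rfl | hyJ)
    · exact absurd hy htC'
    · exact hJI hyJ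

/-- Circuits of a restriction to `R ⊆ M.E` contained in `R` are exactly circuits of `M`. -/
lemma mcircuit_restrict_iff {M : Matroid α} {R C : Set α} (hR : R ⊆ M.E) (hC : C ⊆ R) :
    MCircuit (M.restrict R) C ↔ MCircuit M C := by
  have hind : ∀ X ⊆ R, ((M.restrict R).Indep X ↔ M.Indep X) := by
    intro X hX
    rw [Matroid.restrict_indep_iff, and_iff_left hX]
  constructor
  · rintro ⟨hdep, hmin⟩
    refine ⟨⟨fun h => hdep.not_indep ((hind C hC).mpr h), hC.trans hR⟩, fun C' hC' => ?_⟩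
    exact (hind C' (hC'.subset.trans hC)).mp (hmin C' hC')
  · rintro ⟨hdep, hmin⟩
    refine ⟨⟨fun h => hdep.not_indep ((hind C hC).mp h), by simpa⟩, fun C' hC' => ?_⟩
    exact (hind C' (hC'.subset.trans hC)).mpr (hmin C' hC')

theorem restricted_subset_feedback_duality (M : Matroid α) (hM : IsBinary M)
    (T F : Set α) (hT : T ⊆ M.E) (hF : F ⊆ M.E \ T) :
    (∀ C, MCircuit (MDelete M F) C → Disjoint C T) ↔
      (∀ t ∈ T, ∃ C, MCircuit M✶ C ∧ t ∈ C ∧ C ⊆ F ∪ {t}) := by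
  have hRE : M.E \ F ⊆ M.E := diff_subset
  constructor
  · intro h t htT
    have htE : t ∈ M.E := hT htT
    have htF : t ∉ F := fun hf => (hF hf).2 htT
    set Z := M.E \ (F ∪ {t}) with hZdef
    have hZE : Z ⊆ M.E := diff_subset
    have htZ : t ∉ Z := fun hz => hz.2 (Or.inr rfl)
    -- Step 1 : t ∉ M.closure Z
    have hP : t ∉ M.closure Z := by
      intro htcl
      obtain ⟨I, hI⟩ := M.exists_isBasis Z
      have htclI : t ∈ M.closure I := by rwa [hI.closure_eq_closure]
      obtain ⟨C, hC, htC, hCsub⟩ :=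
        exists_fund_circuit hI.indep (fun hI' => htZ (hI.subset hI')) htclI
      have hCR : C ⊆ M.E \ F := by
        refine hCsub.trans (insert_subset ⟨htE, htF⟩ ((hI.subset.trans ?_)))
        exact fun x hx => ⟨hx.1, fun hxF => hx.2 (Or.inl hxF)⟩
      have := h C ((mcircuit_restrict_iff hRE hCR).mpr hC)
      exact this.ne_of_mem htC htT rfl
    -- Step 2 : build the cocircuit
    obtain ⟨J, hJ⟩ := M.exists_isBasis Z
    have htclJ : t ∉ M.closure J := by rwa [hJ.closure_eq_closure]
    have hJt : M.Indep (insert t J) := by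
      rw [hJ.indep.insert_indep_iff_of_notMem (fun h' => htZ (hJ.subset h'))]
      exact ⟨htE, htclJ⟩
    obtain ⟨B, hB, hJtB⟩ := hJt.exists_isBase_superset
    have htB : t ∈ B := hJtB (mem_insert _ _)
    set I₀ := F \ B with hI₀def
    have hI₀E : I₀ ⊆ M.E := diff_subset.trans (hF.trans diff_subset)
    have hI₀ind : M✶.Indep I₀ := by
      rw [Matroid.dual_indep_iff_exists']
      exact ⟨hI₀E, B, hB, disjoint_sdiff_left⟩
    have htI₀ : t ∉ I₀ := fun h' => htF h'.1
    have hdep : M✶.Dep (insert t I₀) := by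
      rw [Matroid.dual_dep_iff_forall]
      refine ⟨fun B' hB' => ?_, insert_subset htE hI₀E⟩
      by_contra hemp
      rw [not_nonempty_iff_eq_empty, ← disjoint_iff_inter_eq_empty] at hemp
      have htB' : t ∉ B' := fun h' => hemp.ne_of_mem (mem_insert _ _) h' rfl
      have hB'sub : B' ⊆ M.closure (B \ {t}) := by
        intro y hyB'
        have hyE : y ∈ M.E := hB'.subset_ground hyB'
        by_cases hyF : y ∈ F
        · have hyB : y ∈ B := by
            by_contra hyB
            exact hemp.ne_of_mem (mem_insert_of_mem _ ⟨hyF, hyB⟩) hyB' rfl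
          exact M.subset_closure _ (diff_subset.trans hB.subset_ground)
            ⟨hyB, fun h' => htF (h' ▸ hyF)⟩
        · have hyZ : y ∈ Z := ⟨hyE, fun h' => h'.elim hyF (fun h'' => htB' (h'' ▸ hyB'))⟩
          have : y ∈ M.closure J := hJ.subset_closure hyZ
          have hJB : J ⊆ B \ {t} := fun x hx =>
            ⟨hJtB (mem_insert_of_mem _ hx), fun h' => htZ (h' ▸ hJ.subset hx)⟩
          exact M.closure_subset_closure hJB this
      have hEcl : M.E ⊆ M.closure (B \ {t}) := by
        rw [← hB'.closure_eq]
        exact M.closure_subset_closure_of_subset_closure hB'sub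
      exact hB.indep.notMem_closure_sdiff_of_mem htB (hEcl htE)
    have htcl : t ∈ M✶.closure I₀ := by
      rw [hI₀ind.mem_closure_iff_of_notMem htI₀]
      exact hdep
    obtain ⟨C, hC, htC, hCsub⟩ := exists_fund_circuit hI₀ind htI₀ htcl
    exact ⟨C, hC, htC, hCsub.trans (insert_subset (Or.inr rfl) (fun x hx => Or.inl hx.1))⟩
  · intro h C hC
    rw [disjoint_right]
    intro t htT htC
    have htE : t ∈ M.E := hT htT
    have htF : t ∉ F := fun hf => (hF hf).2 htT
    set Z := M.E \ (F ∪ {t}) with hZdef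
    -- From the circuit C : t ∈ closure Z
    have hCR : C ⊆ M.E \ F := hC.1.subset_ground.trans_eq (by simp [MDelete])
    have hCM : MCircuit M C := (mcircuit_restrict_iff hRE hCR).mp hC
    have hCdiff : M.Indep (C \ {t}) := hCM.2 _ (sdiff_singleton_ssubset.mpr htC)
    have htclC : t ∈ M.closure (C \ {t}) := by
      have hdepC : M.Dep (insert t (C \ {t})) := by
        rw [insert_diff_singleton, insert_eq_of_mem htC]; exact hCM.1
      exact (hCdiff.insert_dep_iff.mp hdepC).1
    have htclZ : t ∈ M.closure Z := by
      refine M.closure_subset_closure (fun y hy => ?_) htclC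
      exact ⟨(hCR hy.1).1, fun h' => h'.elim (hCR hy.1).2 hy.2⟩
    -- From the cocircuit : t ∉ closure Z
    obtain ⟨D, hD, htD, hDsub⟩ := h t htT
    have hDdiff : M✶.Indep (D \ {t}) := hD.2 _ (sdiff_singleton_ssubset.mpr htD)
    obtain ⟨B, hB, hdisj⟩ := (Matroid.dual_indep_iff_exists'.mp hDdiff).2
    have hS : M.Spanning ((B \ {t}) ∪ Z) := by
      have hSE : (B \ {t}) ∪ Z ⊆ M.E :=
        union_subset (diff_subset.trans hB.subset_ground) diff_subset
      have hBsub : B ⊆ M.closure ((B \ {t}) ∪ Z) := by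
        intro y hyB
        by_cases hyt : y = t
        · subst hyt
          exact M.closure_subset_closure subset_union_right htclZ
        · exact M.subset_closure _ hSE (Or.inl ⟨hyB, hyt⟩)
      rw [Matroid.spanning_iff_ground_subset_closure hSE]
      calc M.E = M.closure B := hB.closure_eq.symm
        _ ⊆ M.closure ((B \ {t}) ∪ Z) :=
            M.closure_subset_closure_of_subset_closure hBsub
    obtain ⟨B', hB', hB'sub⟩ := hS.exists_isBase_subset
    have hDindep : M✶.Indep D := by
      rw [Matroid.dual_indep_iff_exists']
      refine ⟨hD.1.subset_ground, B', hB', disjoint_left.mpr fun x hxD hxB' => ?_⟩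
      rcases hB'sub hxB' with (hx | hx)
      · exact hdisj.ne_of_mem ⟨hxD, hx.2⟩ hx.1 rfl
      · exact hx.2 (hDsub hxD)
    exact hD.1.not_indep hDindep
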